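/- For the ring R = ℤ[t]/(t²−1), the first Ext group Ext¹_R(R/I, R/(2,I)) is isomorphic as an R-module to R/(2,I) (in particular, as an abelian group it is ℤ/2), where I = (t−1) and R/(2,I) is the quotient of R by the ideal generated by 2 and t−1. Consequently, any R-module M fitting into a short exact sequence 0 → R/(2,I) → M → R/I → 0 is isomorphic as an R-module either to (R/I) ⊕ (R/(2,I)) or to R/2I. -/

import Mathlib

noncomputable section

abbrev R : Type := Polynomial ℤ ⧸ Ideal.span ({Polynomial.X ^ 2 - 1} : Set (Polynomial ℤ))

def t : R := Ideal.Quotient.mk _ Polynomial.X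

def I : Ideal R := Ideal.span {t - 1}
def J : Ideal R := Ideal.span {t + 1}

/-- `Ext¹_R(M, N)`, the first Ext group of the `R`-modules `M` and `N`, defined via the
derived-functor `Ext` bifunctor on the category of `R`-modules. -/
def ext1 (M N : Type) [AddCommGroup M] [Module R M] [AddCommGroup N] [Module R N] :
    ModuleCat R :=
  ((Ext R (ModuleCat R) 1).obj (Opposite.op (ModuleCat.of R M))).obj (ModuleCat.of R N)


open Polynomial in
lemma mk_X_sub_one : (Ideal.Quotient.mk _ (X - 1 : Polynomial ℤ) : R) = t - 1 := by
  simp [t, map_sub, map_one]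

open Polynomial in
lemma mk_X_add_one : (Ideal.Quotient.mk _ (X + 1 : Polynomial ℤ) : R) = t + 1 := by
  simp [t, map_add, map_one]

open Polynomial in
lemma tm1_mul_tp1 : (t - 1) * (t + 1) = (0 : R) := by
  rw [← mk_X_sub_one, ← mk_X_add_one, ← map_mul, Ideal.Quotient.eq_zero_iff_mem]
  have : (X - 1) * (X + 1) = (X ^ 2 - 1 : Polynomial ℤ) := by ring
  rw [this]
  exact Ideal.subset_span rfl

open Polynomial in
lemma ann_tm1 (a : R) (h : a * (t - 1) = 0) : ∃ b : R, a = b * (t + 1) := by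
  obtain ⟨p, rfl⟩ := Ideal.Quotient.mk_surjective a
  rw [← mk_X_sub_one, ← map_mul, Ideal.Quotient.eq_zero_iff_mem,
    Ideal.mem_span_singleton] at h
  obtain ⟨q, hq⟩ := h
  have hX : (X - 1 : Polynomial ℤ) ≠ 0 := by
    intro hc
    have := congrArg (Polynomial.coeff · 1) hc
    simp [Polynomial.coeff_one] at this
  have hp : p = q * (X + 1) := by
    apply mul_right_cancel₀ hX
    rw [hq]; ring
  exact ⟨Ideal.Quotient.mk _ q, by rw [hp, map_mul, mk_X_add_one]⟩

open Polynomial in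
lemma ann_tp1 (a : R) (h : a * (t + 1) = 0) : ∃ b : R, a = b * (t - 1) := by
  obtain ⟨p, rfl⟩ := Ideal.Quotient.mk_surjective a
  rw [← mk_X_add_one, ← map_mul, Ideal.Quotient.eq_zero_iff_mem,
    Ideal.mem_span_singleton] at h
  obtain ⟨q, hq⟩ := h
  have hX : (X + 1 : Polynomial ℤ) ≠ 0 := by
    intro hc
    have := congrArg (Polynomial.coeff · 1) hc
    simp [Polynomial.coeff_one] at this
  have hp : p = q * (X - 1) := by
    apply mul_right_cancel₀ hX
    rw [hq]; ring
  exact ⟨Ideal.Quotient.mk _ q, by rw [hp, map_mul, mk_X_sub_one]⟩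

open CategoryTheory


def w : ℕ → R := fun n => if Even n then t - 1 else t + 1

lemma w_mul_w (n : ℕ) : w (n + 1) * w n = 0 := by
  by_cases h : Even n
  · have h1 : ¬ Even (n + 1) := by simp [Nat.even_add_one, h]
    simp only [w, if_pos h, if_neg h1]
    rw [mul_comm]; exact tm1_mul_tp1
  · have h1 : Even (n + 1) := Nat.even_add_one.mpr h
    simp only [w, if_pos h1, if_neg h]
    exact tm1_mul_tp1

def mulHom (c : R) : ModuleCat.of R R ⟶ ModuleCat.of R R :=
  ModuleCat.ofHom (LinearMap.mulRight R c)

lemma mulHom_apply (c x : R) : mulHom c x = x * c := by simp [mulHom]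

lemma mulHom_comp (a b : R) : mulHom a ≫ mulHom b = mulHom (a * b) := by
  refine ModuleCat.hom_ext (LinearMap.ext fun (x : R) => ?_)
  show (x * a) * b = x * (a * b)
  exact mul_assoc x a b

lemma mulHom_zero : mulHom 0 = 0 := by
  refine ModuleCat.hom_ext (LinearMap.ext fun (x : R) => ?_)
  show x * 0 = 0
  exact mul_zero x

def Pc : ChainComplex (ModuleCat R) ℕ :=
  ChainComplex.of (fun _ => ModuleCat.of R R) (fun n => mulHom (w n))
    (fun n => by rw [mulHom_comp, w_mul_w, mulHom_zero])

instance (n : ℕ) : Projective (Pc.X n) :=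
  ModuleCat.projective_of_free (Module.Basis.singleton Unit R)

def π0 : ModuleCat.of R R ⟶ ModuleCat.of R (R ⧸ I) :=
  ModuleCat.ofHom (Algebra.linearMap R (R ⧸ I))

lemma Pc_d (n : ℕ) : Pc.d (n + 1) n = mulHom (w n) := ChainComplex.of_d (fun _ => ModuleCat.of R R) (fun n => mulHom (w n)) n

lemma w_zero : w 0 = t - 1 := if_pos Even.zero

lemma hπ0 : Pc.d 1 0 ≫ π0 = 0 := by
  rw [Pc_d]
  refine ModuleCat.hom_ext (LinearMap.ext fun (x : R) => ?_)
  show (Ideal.Quotient.mk I (x * w 0)) = 0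
  rw [Ideal.Quotient.eq_zero_iff_mem, w_zero]
  exact Ideal.mul_mem_left _ _ (Ideal.subset_span rfl)

lemma key_exact (n : ℕ) : ∀ x : R, x * w n = 0 → ∃ y : R, y * w (n + 1) = x := by
  intro x hx
  by_cases h : Even n
  · have h1 : ¬ Even (n + 1) := by simp [Nat.even_add_one, h]
    simp only [w, if_pos h] at hx
    obtain ⟨b, hb⟩ := ann_tm1 x hx
    exact ⟨b, by simp only [w, if_neg h1]; exact hb.symm⟩
  · have h1 : Even (n + 1) := Nat.even_add_one.mpr h
    simp only [w, if_neg h] at hx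
    obtain ⟨b, hb⟩ := ann_tp1 x hx
    exact ⟨b, by simp only [w, if_pos h1]; exact hb.symm⟩

lemma sc_comp_zero (n : ℕ) : mulHom (w (n+1)) ≫ mulHom (w n) = 0 := by
  rw [mulHom_comp, w_mul_w, mulHom_zero]

lemma sc_exact (n : ℕ) :
    (ShortComplex.mk (mulHom (w (n+1))) (mulHom (w n)) (sc_comp_zero n)).Exact := by
  rw [ShortComplex.moduleCat_exact_iff]
  intro x hx
  obtain ⟨y, hy⟩ := key_exact n x (by simpa [mulHom] using hx)
  exact ⟨y, by simpa [mulHom] using hy⟩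

lemma Pc_exactAt_succ (n : ℕ) : Pc.ExactAt (n + 1) := by
  rw [HomologicalComplex.exactAt_iff' _ (n + 2) (n + 1) n (by simp) (by simp)]
  refine ShortComplex.exact_of_iso
    (S₁ := ShortComplex.mk (mulHom (w (n+1))) (mulHom (w n)) (sc_comp_zero n))
    (ShortComplex.isoMk (Iso.refl _) (Iso.refl _) (Iso.refl _) ?_ ?_) (sc_exact n)
  · dsimp [HomologicalComplex.sc', HomologicalComplex.shortComplexFunctor']
    rw [Pc_d]
    rfl
  · dsimp [HomologicalComplex.sc', HomologicalComplex.shortComplexFunctor']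
    rw [Pc_d]
    rfl

lemma hπ0' : mulHom (w 0) ≫ π0 = 0 := by rw [← Pc_d 0]; exact hπ0

lemma key0 : ∀ x : R, Ideal.Quotient.mk I x = 0 → ∃ y : R, y * w 0 = x := by
  intro x hx
  rw [Ideal.Quotient.eq_zero_iff_mem] at hx
  obtain ⟨y, hy⟩ := Ideal.mem_span_singleton'.1 hx
  exact ⟨y, by rw [w_zero]; exact hy⟩

lemma sc0_exact : (ShortComplex.mk (mulHom (w 0)) π0 hπ0').Exact := by
  rw [ShortComplex.moduleCat_exact_iff]
  intro x hx
  obtain ⟨y, hy⟩ := key0 x (by simpa [π0] using hx)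
  exact ⟨y, by simpa [mulHom] using hy⟩

def Pres : ProjectiveResolution (ModuleCat.of R (R ⧸ I)) where
  complex := Pc
  π := (ChainComplex.toSingle₀Equiv _ _).symm ⟨π0, hπ0⟩
  quasiIso := ⟨fun n => by
    cases n with
    | zero =>
      rw [ChainComplex.quasiIsoAt₀_iff, ShortComplex.quasiIso_iff_of_zeros']
      · refine (ShortComplex.exact_and_epi_g_iff_of_iso
          (S₁ := ShortComplex.mk (mulHom (w 0)) π0 hπ0') ?_).2
          ⟨sc0_exact, (ModuleCat.epi_iff_surjective π0).2
            (fun q => by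
              obtain ⟨a, rfl⟩ := Ideal.Quotient.mk_surjective q
              exact ⟨a, by simp [π0]⟩)⟩
        refine ShortComplex.isoMk (Iso.refl _) (Iso.refl _) (Iso.refl _) ?_ ?_
        · dsimp
          simp
        · dsimp
          simp [ChainComplex.toSingle₀Equiv]
      all_goals rfl
    | succ n =>
      rw [quasiIsoAt_iff_exactAt']
      · exact Pc_exactAt_succ n
      · apply ChainComplex.exactAt_succ_single_obj⟩

abbrev kI : Ideal R := Ideal.span ({2, t - 1} : Set R)
abbrev kR : Type := R ⧸ kI

lemma smul_k {c : R} (hc : c ∈ kI) (x : kR) : c • x = 0 := by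
  obtain ⟨r, rfl⟩ := Ideal.Quotient.mk_surjective x
  show Ideal.Quotient.mk kI (c * r) = 0
  rw [Ideal.Quotient.eq_zero_iff_mem]
  exact Ideal.mul_mem_right _ _ hc

lemma tm1_mem_kI : (t - 1 : R) ∈ kI := Ideal.subset_span (by simp)
lemma two_mem_kI : (2 : R) ∈ kI := Ideal.subset_span (by simp)
lemma tp1_mem_kI : (t + 1 : R) ∈ kI := by
  have h : (t + 1 : R) = (t - 1) + 2 := by ring
  rw [h]; exact Ideal.add_mem _ tm1_mem_kI two_mem_kI

lemma w_mem_kI (n : ℕ) : w n ∈ kI := by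
  by_cases h : Even n
  · simp only [w, if_pos h]; exact tm1_mem_kI
  · simp only [w, if_neg h]; exact tp1_mem_kI

def Yk : ModuleCat R := ModuleCat.of R kR

def Cc : CochainComplex (ModuleCat R) ℕ := Pc.linearYonedaObj R Yk

lemma Cc_d_succ (n : ℕ) : Cc.d n (n + 1) = 0 := by
  rw [show Cc.d n (n + 1) = ModuleCat.ofHom (Linear.leftComp R Yk (Pc.d (n + 1) n)) from
    ChainComplex.linearYonedaObj_d _ _ _ _ _, Pc_d]
  refine ModuleCat.hom_ext (LinearMap.ext fun (φ : Pc.X n ⟶ Yk) => ?_)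
  show mulHom (w n) ≫ φ = 0
  refine ModuleCat.hom_ext (LinearMap.ext fun (x : R) => ?_)
  show φ (x * w n) = 0
  have h : (x * w n : R) = (w n) • x := by rw [smul_eq_mul, mul_comm]
  rw [h]; exact (φ.hom.map_smul (w n) x).trans (smul_k (w_mem_kI n) _)

def homologyIso1 : Cc.homology 1 ≅ Cc.X 1 :=
  Cc.homologyIsoSc' 0 1 2 (by simp) (by simp) ≪≫
    (ShortComplex.HomologyData.ofZeros _ (Cc_d_succ 0) (Cc_d_succ 1)).left.homologyIso

def finalEquiv : (ext1 (R ⧸ I) kR) ≃ₗ[R] kR :=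
  ((Pres.isoExt 1 Yk) ≪≫ homologyIso1).toLinearEquiv ≪≫ₗ ModuleCat.homLinearEquiv (S := R) ≪≫ₗ LinearMap.ringLmapEquivSelf R R kR

lemma t_sq : t * t = 1 := by linear_combination tm1_mul_tp1

open Polynomial in
lemma R_rep (r : R) : ∃ n : ℤ, r - (n : R) ∈ I := by
  obtain ⟨p, rfl⟩ := Ideal.Quotient.mk_surjective r
  refine ⟨p.eval 1, ?_⟩
  obtain ⟨q, hq⟩ := Polynomial.X_sub_C_dvd_sub_C_eval (a := (1 : ℤ)) (p := p)
  rw [Polynomial.C_1] at hq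
  have h1 : (Ideal.Quotient.mk _ p : R) - ((p.eval 1 : ℤ) : R) =
      (t - 1) * Ideal.Quotient.mk _ q := by
    rw [← mk_X_sub_one, ← map_mul, ← hq, map_sub,
      show (Ideal.Quotient.mk (Ideal.span ({Polynomial.X ^ 2 - 1} : Set (Polynomial ℤ)))
          (Polynomial.C (p.eval 1)) : R) = ((p.eval 1 : ℤ) : R) from
        eq_intCast ((Ideal.Quotient.mk _).comp (Polynomial.C : ℤ →+* Polynomial ℤ)) _]
  rw [h1]
  exact Ideal.mul_mem_right _ _ (Ideal.subset_span rfl)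

lemma I_le_kI : I ≤ kI := by
  rw [I, Ideal.span_le]
  rintro x rfl
  exact tm1_mem_kI

lemma kR_cases (x : kR) : x = 0 ∨ x = Ideal.Quotient.mk kI 1 := by
  obtain ⟨r, rfl⟩ := Ideal.Quotient.mk_surjective x
  obtain ⟨n, hn⟩ := R_rep r
  have h1 : Ideal.Quotient.mk kI r = Ideal.Quotient.mk kI ((n : ℤ) : R) := by
    rw [Ideal.Quotient.mk_eq_mk_iff_sub_mem]
    exact I_le_kI hn
  rcases Int.even_or_odd n with ⟨m, hm⟩ | ⟨m, hm⟩
  · left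
    rw [h1, Ideal.Quotient.eq_zero_iff_mem, hm]
    push_cast
    have h2 : ((m : R) + m) = 2 * m := by ring
    rw [h2]
    exact Ideal.mul_mem_right _ _ two_mem_kI
  · right
    rw [h1, Ideal.Quotient.mk_eq_mk_iff_sub_mem, hm]
    push_cast
    have h2 : ((2 * (m : R) + 1) - 1) = 2 * m := by ring
    rw [h2]
    exact Ideal.mul_mem_right _ _ two_mem_kI

-- case where the extension splits
lemma split_case {M : Type} [AddCommGroup M] [Module R M]
    (f : kR →ₗ[R] M) (g : M →ₗ[R] (R ⧸ I))
    (hf : Function.Injective f)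
    (hfg : LinearMap.range f = LinearMap.ker g)
    (m : M) (hm : g m = Ideal.Quotient.mk I 1) (hm0 : (t - 1) • m = 0) :
    Nonempty (M ≃ₗ[R] ((R ⧸ I) × kR)) := by
  have hIm : ∀ x ∈ I, x • m = 0 := by
    intro x hx
    obtain ⟨a, rfl⟩ := Ideal.mem_span_singleton'.1 hx
    rw [mul_smul, hm0, smul_zero]
  let s : (R ⧸ I) →ₗ[R] M :=
    Submodule.liftQ I (LinearMap.toSpanSingleton R M m)
      (fun x hx => LinearMap.mem_ker.mpr (hIm x hx))
  have hs : ∀ r : R, s (Ideal.Quotient.mk I r) = r • m := fun r => rfl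
  have hgs : ∀ y : R ⧸ I, g (s y) = y := by
    intro y
    obtain ⟨r, rfl⟩ := Ideal.Quotient.mk_surjective y
    rw [hs, map_smul, hm]
    show Ideal.Quotient.mk I (r * 1) = Ideal.Quotient.mk I r
    rw [mul_one]
  have hgf : ∀ b : kR, g (f b) = 0 := by
    intro b
    have hb : f b ∈ LinearMap.ker g := hfg ▸ LinearMap.mem_range_self f b
    exact hb
  let ψ : ((R ⧸ I) × kR) →ₗ[R] M :=
    s.comp (LinearMap.fst R (R ⧸ I) kR) + f.comp (LinearMap.snd R (R ⧸ I) kR)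
  have hψ : ∀ a b, ψ (a, b) = s a + f b := fun a b => rfl
  have hbij : Function.Bijective ψ := by
    constructor
    · rintro ⟨a, b⟩ ⟨a', b'⟩ hab
      rw [hψ, hψ] at hab
      have h1 : a = a' := by
        have h2 := congrArg g hab
        simpa [hgs, hgf] using h2
      subst h1
      have h2 : f b = f b' := by
        have h3 := congrArg (fun z => z - s a) hab
        simpa using h3
      exact Prod.ext rfl (hf h2)
    · intro x
      have hker : x - s (g x) ∈ LinearMap.ker g := by
        simp [hgs]
      rw [← hfg] at hker
      obtain ⟨b, hb⟩ := hker
      exact ⟨(g x, b), by rw [hψ, hb]; abel⟩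
  exact ⟨(LinearEquiv.ofBijective ψ hbij).symm⟩

set_option maxHeartbeats 1000000 in
lemma nonsplit_case {M : Type} [AddCommGroup M] [Module R M]
    (f : kR →ₗ[R] M) (g : M →ₗ[R] (R ⧸ I))
    (hf : Function.Injective f)
    (hfg : LinearMap.range f = LinearMap.ker g)
    (m : M) (hm : g m = Ideal.Quotient.mk I 1)
    (hm1 : f (Ideal.Quotient.mk kI 1) = (t - 1) • m) :
    Nonempty (M ≃ₗ[R] (R ⧸ (Ideal.span ({2} : Set R) * I))) := by
  have hfc : ∀ a : R, f (Ideal.Quotient.mk kI a) = (a * (t - 1)) • m := by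
    intro a
    have h1 : (Ideal.Quotient.mk kI a : kR) = a • Ideal.Quotient.mk kI 1 := by
      show Ideal.Quotient.mk kI a = Ideal.Quotient.mk kI (a * 1)
      rw [mul_one]
    rw [h1, map_smul, hm1, ← mul_smul]
  let φ : R →ₗ[R] M := LinearMap.toSpanSingleton R M m
  have hφ : ∀ r : R, φ r = r • m := fun r => rfl
  have hmk : ∀ r : R, (r : R) • (Ideal.Quotient.mk I 1 : R ⧸ I) = Ideal.Quotient.mk I r := by
    intro r
    show Ideal.Quotient.mk I (r * 1) = Ideal.Quotient.mk I r
    rw [mul_one]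
  have h2I : Ideal.span ({2} : Set R) * I = Ideal.span {2 * (t - 1)} := by
    rw [I, Ideal.span_singleton_mul_span_singleton]
  have hsurj : Function.Surjective φ := by
    intro x
    obtain ⟨r, hr⟩ := Ideal.Quotient.mk_surjective (g x)
    have hker : x - r • m ∈ LinearMap.ker g := by
      rw [LinearMap.mem_ker, map_sub, map_smul, hm, hmk, hr, sub_self]
    rw [← hfg] at hker
    obtain ⟨c, hc⟩ := hker
    obtain ⟨a, rfl⟩ := Ideal.Quotient.mk_surjective c
    rw [hfc] at hc
    refine ⟨r + a * (t - 1), ?_⟩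
    rw [hφ, add_smul, hc]
    abel
  have hker : LinearMap.ker φ = (Ideal.span ({2} : Set R) * I : Ideal R) := by
    rw [h2I]
    apply le_antisymm
    · intro x hx
      rw [LinearMap.mem_ker, hφ] at hx
      have hgx : g (x • m) = 0 := by rw [hx, map_zero]
      rw [map_smul, hm, hmk] at hgx
      have hxI : x ∈ I := by
        rw [← Ideal.Quotient.eq_zero_iff_mem]
        exact hgx
      obtain ⟨a, ha⟩ := Ideal.mem_span_singleton'.1 hxI
      have hfa : f (Ideal.Quotient.mk kI a) = 0 := by
        rw [hfc, ha, hx]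
      have ha0 : a ∈ Ideal.span ({2, t - 1} : Set R) := by
        rw [← Ideal.Quotient.eq_zero_iff_mem]
        apply hf
        rw [hfa, map_zero]
      rw [Ideal.span_insert, Submodule.mem_sup] at ha0
      obtain ⟨y, hy, z, hz, hyz⟩ := ha0
      obtain ⟨u, rfl⟩ := Ideal.mem_span_singleton'.1 hy
      obtain ⟨v, rfl⟩ := Ideal.mem_span_singleton'.1 hz
      refine Ideal.mem_span_singleton'.2 ⟨u - v, ?_⟩
      have ha' : a = u * 2 + v * (t - 1) := hyz.symm
      rw [← ha]
      linear_combination (-(t - 1)) * ha' + (-v) * t_sq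
    · rw [Ideal.span_le]
      rintro x rfl
      rw [SetLike.mem_coe, LinearMap.mem_ker, hφ]
      have h1 : (2 * (t - 1) : R) • m = (2 : R) • ((t - 1) • m) := by
        rw [← mul_smul]
      rw [h1, ← hm1, ← map_smul]
      have h2 : ((2 : R) • Ideal.Quotient.mk kI 1 : kR) = 0 := by
        show Ideal.Quotient.mk kI (2 * 1) = 0
        rw [mul_one, Ideal.Quotient.eq_zero_iff_mem]
        exact two_mem_kI
      rw [h2, map_zero]
  exact ⟨(φ.quotKerEquivOfSurjective hsurj).symm ≪≫ₗ Submodule.quotEquivOfEq _ _ hker⟩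


theorem ext1_RmodI_Rmod2I_structure :
    (Nonempty ((ext1 (R ⧸ I) (R ⧸ Ideal.span ({2, t - 1} : Set R))) ≃ₗ[R]
        (R ⧸ Ideal.span ({2, t - 1} : Set R)))) ∧
    (∀ (M : Type) [AddCommGroup M] [Module R M]
      (f : (R ⧸ Ideal.span ({2, t - 1} : Set R)) →ₗ[R] M)
      (g : M →ₗ[R] (R ⧸ I)),
      Function.Injective f → Function.Surjective g →
      LinearMap.range f = LinearMap.ker g →
      (Nonempty (M ≃ₗ[R] ((R ⧸ I) × (R ⧸ Ideal.span ({2, t - 1} : Set R)))) ∨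
       Nonempty (M ≃ₗ[R] (R ⧸ (Ideal.span ({2} : Set R) * I))))) := by
  constructor
  · exact ⟨finalEquiv⟩
  · intro M _ _ f g hf hg hfg
    obtain ⟨m, hm⟩ := hg (Ideal.Quotient.mk I 1)
    have hker : (t - 1) • m ∈ LinearMap.ker g := by
      rw [LinearMap.mem_ker, map_smul, hm]
      show Ideal.Quotient.mk I ((t - 1) * 1) = 0
      rw [mul_one, Ideal.Quotient.eq_zero_iff_mem]
      exact Ideal.subset_span rfl
    rw [← hfg] at hker
    obtain ⟨ε, hε⟩ := hker
    rcases kR_cases ε with h | h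
    · left
      apply split_case f g hf hfg m hm
      rw [← hε, h, map_zero]
    · right
      apply nonsplit_case f g hf hfg m hm
      rw [← h, hε]
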